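/- Let (X, μ) be a probability measure space and H : X → ℝ a measurable function with m ≤ H(x) ≤ M for all x ∈ X. Let S, D_1, …, D_k be pairwise disjoint measurable subsets of X whose union is X, and let α_1 < α_2 < ⋯ < α_k be real numbers with m ≤ α_1, α_k ≤ M, such that α_1 ≤ H(x) ≤ α_k for all x ∈ S. Define b : [m, M] → ℝ by b(t) = μ(S ∩ {H ≤ t}) + Σ_{j : α_j < t} μ(D_j). Then M − ∫_m^M b(t) dt = ∫_X H dμ + Σ_{j=1}^k ∫_{D_j} (α_j − H) dμ. -/

import Mathlib

open MeasureTheory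

lemma grubb_integrable_of_mem_Icc {X : Type*} [MeasurableSpace X] (ν : Measure X)
    [IsFiniteMeasure ν] {H : X → ℝ} (hH : Measurable H) {m M : ℝ}
    (hbd : ∀ x, H x ∈ Set.Icc m M) : Integrable H ν := by
  refine ⟨hH.aestronglyMeasurable, ?_⟩
  apply HasFiniteIntegral.of_bounded (C := max |m| |M|)
  filter_upwards with x
  rw [Real.norm_eq_abs, abs_le]
  constructor
  · exact le_trans (neg_le_neg (le_max_left _ _)) (le_trans (neg_abs_le m) (hbd x).1)
  · exact le_trans (hbd x).2 (le_trans (le_abs_self M) (le_max_right _ _))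

/-- Layer cake formula for a bounded function on a finite measure space. -/
lemma grubb_layer_aux {X : Type*} [MeasurableSpace X] (ν : Measure X) [IsFiniteMeasure ν]
    {H : X → ℝ} (hH : Measurable H) {m M : ℝ} (hmM : m ≤ M)
    (hbd : ∀ x, H x ∈ Set.Icc m M) :
    ∫ x, H x ∂ν = m * (ν Set.univ).toReal +
      ∫ t in m..M, (ν {x | t < H x}).toReal := by
  have hint : Integrable H ν := grubb_integrable_of_mem_Icc ν hH hbd
  have hf : Integrable (fun x => H x - m) ν := hint.sub (integrable_const m)
  have key := hf.integral_eq_integral_Ioc_meas_le (M := M - m)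
    (Filter.Eventually.of_forall fun x => sub_nonneg.2 (hbd x).1)
    (Filter.Eventually.of_forall fun x => sub_le_sub_right (hbd x).2 m)
  have hlhs : ∫ x, (H x - m) ∂ν = ∫ x, H x ∂ν - m * (ν Set.univ).toReal := by
    rw [integral_sub hint (integrable_const m), integral_const, smul_eq_mul, mul_comm, Measure.real]
  have hrhs1 : ∫ t in Set.Ioc 0 (M - m), (ν {a | t ≤ H a - m}).toReal
      = ∫ t in (0 : ℝ)..(M - m), (ν {a | t ≤ H a - m}).toReal :=
    (intervalIntegral.integral_of_le (by linarith)).symm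
  have hrhs2 : ∫ t in (0 : ℝ)..(M - m), (ν {a | t ≤ H a - m}).toReal
      = ∫ t in m..M, (ν {a | t ≤ H a}).toReal := by
    have := intervalIntegral.integral_comp_sub_right (a := m) (b := M)
      (fun t => (ν {a | t ≤ H a - m}).toReal) m
    rw [sub_self] at this
    rw [← this]
    apply intervalIntegral.integral_congr
    intro t _
    simp only [sub_le_sub_iff_right]
  have hae : ∀ᵐ t : ℝ, ν {a | t ≤ H a} = ν {a | t < H a} := by
    rw [ae_iff]
    exact Set.Countable.measure_zero (countable_meas_le_ne_meas_lt ν H) _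
  have hrhs3 : ∫ t in m..M, (ν {a | t ≤ H a}).toReal
      = ∫ t in m..M, (ν {a | t < H a}).toReal := by
    apply intervalIntegral.integral_congr_ae
    filter_upwards [hae] with t ht _ using by rw [ht]
  simp only [Measure.real] at key
  rw [hlhs, hrhs1, hrhs2, hrhs3] at key
  linarith

theorem grubb_quasiState_computation
    {X : Type*} [MeasurableSpace X] (μ : Measure X) [IsProbabilityMeasure μ]
    (H : X → ℝ) (hH : Measurable H) (m M : ℝ) (hbd : ∀ x, H x ∈ Set.Icc m M)
    (k : ℕ) (hk : 0 < k)
    (S : Set X) (D : Fin k → Set X)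
    (hSmeas : MeasurableSet S) (hDmeas : ∀ j, MeasurableSet (D j))
    (hDdisj : Pairwise (Function.onFun Disjoint D))
    (hSDdisj : ∀ j, Disjoint S (D j))
    (hcover : S ∪ (⋃ j, D j) = Set.univ)
    (α : Fin k → ℝ) (hα : StrictMono α)
    (hα₁ : m ≤ α ⟨0, hk⟩) (hαₖ : α ⟨k - 1, by omega⟩ ≤ M)
    (hHS : ∀ x ∈ S, H x ∈ Set.Icc (α ⟨0, hk⟩) (α ⟨k - 1, by omega⟩))
    (b : ℝ → ℝ)
    (hb : ∀ t, b t = (μ (S ∩ {x | H x ≤ t})).toReal +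
      ∑ j : Fin k, if α j < t then (μ (D j)).toReal else 0) :
    M - ∫ t in m..M, b t =
      ∫ x, H x ∂μ + ∑ j : Fin k, ∫ x in D j, (α j - H x) ∂μ := by
  classical
  have hαm : ∀ j, m ≤ α j := fun j =>
    hα₁.trans (hα.monotone (by rw [Fin.le_def]; exact Nat.zero_le _))
  have hαM : ∀ j, α j ≤ M := fun j =>
    (hα.monotone (by rw [Fin.le_def]; exact Nat.le_pred_of_lt j.isLt)).trans hαₖ
  have hmM : m ≤ M := (hαm _).trans (hαM ⟨0, hk⟩)
  have hHint : Integrable H μ := grubb_integrable_of_mem_Icc μ hH hbd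
  have hUmeas : MeasurableSet (⋃ j, D j) := MeasurableSet.iUnion hDmeas
  have hdisjU : Disjoint S (⋃ j, D j) := Set.disjoint_iUnion_right.2 hSDdisj
  -- split the total integral along the partition
  have hsplit : ∫ x, H x ∂μ = ∫ x in S, H x ∂μ + ∑ j, ∫ x in D j, H x ∂μ := by
    rw [← setIntegral_univ (f := H) (μ := μ), ← hcover,
      setIntegral_union hdisjU hUmeas hHint.integrableOn hHint.integrableOn,
      integral_iUnion_fintype hDmeas hDdisj fun j => hHint.integrableOn]
  -- measures sum to 1
  have hsum : (μ S).toReal + ∑ j, (μ (D j)).toReal = 1 := by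
    have h1 : μ S + ∑ j, μ (D j) = 1 := by
      rw [← tsum_fintype (L := .unconditional _), ← measure_iUnion hDdisj hDmeas,
        ← measure_union hdisjU hUmeas, hcover, measure_univ]
    have h2 := congrArg ENNReal.toReal h1
    rwa [ENNReal.toReal_add (measure_ne_top μ S)
        (ENNReal.sum_lt_top.mpr fun j _ => measure_lt_top μ (D j)).ne,
      ENNReal.toReal_sum (fun j _ => measure_ne_top μ (D j)),
      ENNReal.toReal_one] at h2
  -- first part of b
  have hlt : ∀ t : ℝ, MeasurableSet {x | t < H x} := fun t =>
    measurableSet_lt measurable_const hH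
  have hanti : Antitone fun t : ℝ => ((μ.restrict S) {x | t < H x}).toReal := by
    intro s t hst
    exact ENNReal.toReal_mono (measure_ne_top _ _)
      (measure_mono fun x hx => lt_of_le_of_lt hst hx)
  have hlayer := grubb_layer_aux (μ.restrict S) hH hmM hbd
  rw [Measure.restrict_apply_univ] at hlayer
  have hrw : ∀ t, (μ (S ∩ {x | H x ≤ t})).toReal
      = (μ S).toReal - ((μ.restrict S) {x | t < H x}).toReal := by
    intro t
    have h1 : μ (S ∩ {x | H x ≤ t}) + μ (S \ {x | H x ≤ t}) = μ S :=
      measure_inter_add_diff S (hH measurableSet_Iic)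
    have h2 : S \ {x | H x ≤ t} = S ∩ {x | t < H x} := by
      ext x; simp [Set.mem_diff, not_le]
    have h3 : (μ.restrict S) {x | t < H x} = μ (S ∩ {x | t < H x}) := by
      rw [Measure.restrict_apply (hlt t), Set.inter_comm]
    rw [h2] at h1
    rw [h3]
    have h4 := congrArg ENNReal.toReal h1
    rw [ENNReal.toReal_add (measure_ne_top _ _) (measure_ne_top _ _)] at h4
    linarith
  have hSint : ∫ t in m..M, (μ (S ∩ {x | H x ≤ t})).toReal
      = M * (μ S).toReal - ∫ x in S, H x ∂μ := by
    have e1 : ∫ t in m..M, (μ (S ∩ {x | H x ≤ t})).toReal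
        = ∫ t in m..M, ((μ S).toReal - ((μ.restrict S) {x | t < H x}).toReal) :=
      intervalIntegral.integral_congr fun t _ => hrw t
    rw [e1, intervalIntegral.integral_sub (intervalIntegrable_const)
        hanti.intervalIntegrable,
      intervalIntegral.integral_const, smul_eq_mul]
    linarith [hlayer]
  -- monotonicity of the indicator pieces
  have hite_mono : ∀ j, Monotone fun t : ℝ =>
      if α j < t then (μ (D j)).toReal else 0 := by
    intro j s t hst
    dsimp only
    by_cases h1 : α j < s
    · rw [if_pos h1, if_pos (h1.trans_le hst)]
    · rw [if_neg h1]
      split_ifs <;> simp [ENNReal.toReal_nonneg]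
  -- value of each indicator integral
  have hDint : ∀ j, (∫ t in m..M, if α j < t then (μ (D j)).toReal else 0)
      = (μ (D j)).toReal * (M - α j) := by
    intro j
    have hadj := intervalIntegral.integral_add_adjacent_intervals
      (a := m) (b := α j) (c := M)
      ((hite_mono j).intervalIntegrable (μ := volume))
      ((hite_mono j).intervalIntegrable (μ := volume))
    have h1 : (∫ t in m..(α j), if α j < t then (μ (D j)).toReal else 0) = 0 := by
      have e1 : (∫ t in m..(α j), if α j < t then (μ (D j)).toReal else 0)
          = ∫ t in m..(α j), (0 : ℝ) := by
        apply intervalIntegral.integral_congr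
        intro t ht
        rw [Set.uIcc_of_le (hαm j)] at ht
        exact if_neg (not_lt.2 ht.2)
      rw [e1, intervalIntegral.integral_zero]
    have h2 : (∫ t in (α j)..M, if α j < t then (μ (D j)).toReal else 0)
        = (μ (D j)).toReal * (M - α j) := by
      have e2 : (∫ t in (α j)..M, if α j < t then (μ (D j)).toReal else 0)
          = ∫ t in (α j)..M, (μ (D j)).toReal := by
        apply intervalIntegral.integral_congr_ae
        filter_upwards with t ht
        rw [Set.uIoc_of_le (hαM j)] at ht
        exact if_pos ht.1
      rw [e2, intervalIntegral.integral_const, smul_eq_mul, mul_comm]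
    rw [← hadj, h1, h2, zero_add]
  -- monotonicity of the sum of indicators
  have hmono1 : Monotone fun t : ℝ => (μ (S ∩ {x | H x ≤ t})).toReal := by
    intro s t hst
    exact ENNReal.toReal_mono (measure_ne_top _ _)
      (measure_mono (Set.inter_subset_inter_right _ fun x hx => le_trans hx hst))
  have hmono2 : Monotone fun t : ℝ =>
      ∑ j : Fin k, if α j < t then (μ (D j)).toReal else 0 := by
    intro s t hst
    exact Finset.sum_le_sum fun j _ => hite_mono j hst
  -- compute ∫ b
  have hbint : ∫ t in m..M, b t
      = (M * (μ S).toReal - ∫ x in S, H x ∂μ)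
        + ∑ j : Fin k, (μ (D j)).toReal * (M - α j) := by
    have e0 : ∫ t in m..M, b t
        = ∫ t in m..M, ((μ (S ∩ {x | H x ≤ t})).toReal
            + ∑ j : Fin k, if α j < t then (μ (D j)).toReal else 0) :=
      intervalIntegral.integral_congr fun t _ => hb t
    have esum : (∫ t in m..M, ∑ j : Fin k, if α j < t then (μ (D j)).toReal else 0)
        = ∑ j : Fin k, ∫ t in m..M, (if α j < t then (μ (D j)).toReal else 0) :=
      intervalIntegral.integral_finset_sum
        (fun j _ => (hite_mono j).intervalIntegrable (μ := volume))
    rw [e0, intervalIntegral.integral_add hmono1.intervalIntegrable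
        hmono2.intervalIntegrable, esum, hSint]
    congr 1
    exact Finset.sum_congr rfl fun j _ => hDint j
  -- compute each ∫_{D j} (α j - H)
  have hDj : ∀ j, ∫ x in D j, (α j - H x) ∂μ
      = (μ (D j)).toReal * α j - ∫ x in D j, H x ∂μ := by
    intro j
    rw [integral_sub (integrable_const _) hHint.integrableOn, integral_const,
      measureReal_restrict_apply_univ, smul_eq_mul, measureReal_def]
  rw [hbint, hsplit, Finset.sum_congr rfl fun j _ => hDj j]
  simp only [mul_sub, Finset.sum_sub_distrib, ← Finset.sum_mul]
  have hsum2 : ∑ j : Fin k, (μ (D j)).toReal = 1 - (μ S).toReal := by linarith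
  rw [hsum2]
  linarith
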